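/- c-extremization for the twisted Klebanov-Witten theory: Let N be a real number and 𝔫₁,…,𝔫₄ real numbers with Σ_I 𝔫_I = 2. Set Υ := 2·Σ_{I=1}^4 [ 𝔫_I²(𝔫_I − 1) − ∏_{J≠I}𝔫_J ], assume Υ ≠ 0, and set Π := Σ_{a<b} 𝔫_a 𝔫_b (Σ_{c∉{a,b}} 𝔫_c²). Define c_r : ℝ³ → ℝ by c_r(Δ₁,Δ₂,Δ₃) = −3[ 2(N²−1) + N²·Σ_{I=1}^4 (𝔫_I−1)(Δ_I/π − 1)² ] where Δ₄ := 2π − Δ₁ − Δ₂ − Δ₃. Then at the point Δ̄_I = (2π/Υ)[ 2(𝔫_I³ − ∏_{J≠I}𝔫_J) − 𝔫_I·Σ_{J=1}^4 𝔫_J² ] (I = 1,2,3) all three partial derivatives of c_r vanish, Δ̄₄ := 2π − Δ̄₁ − Δ̄₂ − Δ̄₃ is given by the same formula with I = 4, and c_r(Δ̄) = 12( N²·Π/Υ + 1/2 ). -/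

import Mathlib

open Real

set_option maxHeartbeats 4000000

/-- c-extremization for the twisted Klebanov-Witten theory: the trial
right-moving central charge `c_r(Δ₁,Δ₂,Δ₃)` (with `Δ₄ = 2π − Δ₁ − Δ₂ − Δ₃`)
has vanishing partial derivatives at the critical point
`Δ̄_I = (2π/Υ)[2(𝔫_I³ − ∏_{J≠I}𝔫_J) − 𝔫_I·Σ_J 𝔫_J²]`, the fourth potential
is given by the same formula with `I = 4`, and the extremal value equals
`12(N²·Π/Υ + 1/2)`. -/
theorem stmt7 (N n1 n2 n3 n4 : ℝ) (hsum : n1 + n2 + n3 + n4 = 2)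
    (Y : ℝ)
    (hY : Y = 2 * ((n1 ^ 2 * (n1 - 1) - n2 * n3 * n4) + (n2 ^ 2 * (n2 - 1) - n1 * n3 * n4)
      + (n3 ^ 2 * (n3 - 1) - n1 * n2 * n4) + (n4 ^ 2 * (n4 - 1) - n1 * n2 * n3)))
    (hY0 : Y ≠ 0)
    (Pr : ℝ)
    (hPr : Pr = n1 * n2 * (n3 ^ 2 + n4 ^ 2) + n1 * n3 * (n2 ^ 2 + n4 ^ 2)
      + n1 * n4 * (n2 ^ 2 + n3 ^ 2) + n2 * n3 * (n1 ^ 2 + n4 ^ 2)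
      + n2 * n4 * (n1 ^ 2 + n3 ^ 2) + n3 * n4 * (n1 ^ 2 + n2 ^ 2))
    (cr : ℝ → ℝ → ℝ → ℝ)
    (hcr : ∀ Δ1 Δ2 Δ3, cr Δ1 Δ2 Δ3 = -3 * (2 * (N ^ 2 - 1)
      + N ^ 2 * ((n1 - 1) * (Δ1 / π - 1) ^ 2 + (n2 - 1) * (Δ2 / π - 1) ^ 2
        + (n3 - 1) * (Δ3 / π - 1) ^ 2
        + (n4 - 1) * ((2 * π - Δ1 - Δ2 - Δ3) / π - 1) ^ 2)))
    (D1 D2 D3 : ℝ)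
    (hD1 : D1 = 2 * π / Y * (2 * (n1 ^ 3 - n2 * n3 * n4) - n1 * (n1 ^ 2 + n2 ^ 2 + n3 ^ 2 + n4 ^ 2)))
    (hD2 : D2 = 2 * π / Y * (2 * (n2 ^ 3 - n1 * n3 * n4) - n2 * (n1 ^ 2 + n2 ^ 2 + n3 ^ 2 + n4 ^ 2)))
    (hD3 : D3 = 2 * π / Y * (2 * (n3 ^ 3 - n1 * n2 * n4) - n3 * (n1 ^ 2 + n2 ^ 2 + n3 ^ 2 + n4 ^ 2))) :
    deriv (fun x => cr x D2 D3) D1 = 0 ∧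
    deriv (fun y => cr D1 y D3) D2 = 0 ∧
    deriv (fun z => cr D1 D2 z) D3 = 0 ∧
    2 * π - D1 - D2 - D3
      = 2 * π / Y * (2 * (n4 ^ 3 - n1 * n2 * n3) - n4 * (n1 ^ 2 + n2 ^ 2 + n3 ^ 2 + n4 ^ 2)) ∧
    cr D1 D2 D3 = 12 * (N ^ 2 * Pr / Y + 1 / 2) := by

  have hπ : (π : ℝ) ≠ 0 := Real.pi_ne_zero
  -- derivative formulas
  have key1 : deriv (fun x => cr x D2 D3) D1
      = -3 * (N ^ 2 * ((n1 - 1) * ((2:ℕ) * (D1 / π - 1) ^ 1 * π⁻¹)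
          + (n4 - 1) * ((2:ℕ) * ((2 * π - D1 - D2 - D3) / π - 1) ^ 1 * (-1 / π)))) := by
    have hfun : (fun x : ℝ => cr x D2 D3) = fun x => -3 * (2 * (N ^ 2 - 1)
        + N ^ 2 * ((n1 - 1) * (x / π - 1) ^ 2 + (n2 - 1) * (D2 / π - 1) ^ 2
          + (n3 - 1) * (D3 / π - 1) ^ 2
          + (n4 - 1) * ((2 * π - x - D2 - D3) / π - 1) ^ 2)) := funext fun x => hcr x D2 D3
    rw [hfun]
    have h1 : HasDerivAt (fun x : ℝ => x / π - 1) π⁻¹ D1 := by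
      simpa using ((hasDerivAt_id D1).div_const π).sub_const 1
    have h2 : HasDerivAt (fun x : ℝ => (2 * π - x - D2 - D3) / π - 1) (-1 / π) D1 := by
      have hlin : HasDerivAt (fun x : ℝ => 2 * π - x - D2 - D3) (-1) D1 := by
        simpa using (((hasDerivAt_id D1).const_sub (2 * π)).sub_const D2).sub_const D3
      simpa using (hlin.div_const π).sub_const 1
    have h1' := (h1.pow 2).const_mul (n1 - 1)
    have h2' := (h2.pow 2).const_mul (n4 - 1)
    have hsumd := ((h1'.add (hasDerivAt_const D1 ((n2 - 1) * (D2 / π - 1) ^ 2))).add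
      (hasDerivAt_const D1 ((n3 - 1) * (D3 / π - 1) ^ 2))).add h2'
    have hfin := ((hsumd.const_mul (N ^ 2)).const_add (2 * (N ^ 2 - 1))).const_mul (-3)
    refine hfin.deriv.trans ?_
    push_cast
    ring
  have key2 : deriv (fun y => cr D1 y D3) D2
      = -3 * (N ^ 2 * ((n2 - 1) * ((2:ℕ) * (D2 / π - 1) ^ 1 * π⁻¹)
          + (n4 - 1) * ((2:ℕ) * ((2 * π - D1 - D2 - D3) / π - 1) ^ 1 * (-1 / π)))) := by
    have hfun : (fun y : ℝ => cr D1 y D3) = fun y => -3 * (2 * (N ^ 2 - 1)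
        + N ^ 2 * ((n1 - 1) * (D1 / π - 1) ^ 2 + (n2 - 1) * (y / π - 1) ^ 2
          + (n3 - 1) * (D3 / π - 1) ^ 2
          + (n4 - 1) * ((2 * π - D1 - y - D3) / π - 1) ^ 2)) := funext fun y => hcr D1 y D3
    rw [hfun]
    have h1 : HasDerivAt (fun y : ℝ => y / π - 1) π⁻¹ D2 := by
      simpa using ((hasDerivAt_id D2).div_const π).sub_const 1
    have h2 : HasDerivAt (fun y : ℝ => (2 * π - D1 - y - D3) / π - 1) (-1 / π) D2 := by
      have hlin : HasDerivAt (fun y : ℝ => 2 * π - D1 - y - D3) (-1) D2 := by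
        have : (fun y : ℝ => 2 * π - D1 - y - D3) = fun y : ℝ => (2 * π - D1) - y - D3 := by
          funext y; ring
        rw [this]
        simpa using ((hasDerivAt_id D2).const_sub (2 * π - D1)).sub_const D3
      simpa using (hlin.div_const π).sub_const 1
    have h1' := (h1.pow 2).const_mul (n2 - 1)
    have h2' := (h2.pow 2).const_mul (n4 - 1)
    have hsumd := (((hasDerivAt_const D2 ((n1 - 1) * (D1 / π - 1) ^ 2)).add h1').add
      (hasDerivAt_const D2 ((n3 - 1) * (D3 / π - 1) ^ 2))).add h2'
    have hfin := ((hsumd.const_mul (N ^ 2)).const_add (2 * (N ^ 2 - 1))).const_mul (-3)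
    refine hfin.deriv.trans ?_
    push_cast
    ring
  have key3 : deriv (fun z => cr D1 D2 z) D3
      = -3 * (N ^ 2 * ((n3 - 1) * ((2:ℕ) * (D3 / π - 1) ^ 1 * π⁻¹)
          + (n4 - 1) * ((2:ℕ) * ((2 * π - D1 - D2 - D3) / π - 1) ^ 1 * (-1 / π)))) := by
    have hfun : (fun z : ℝ => cr D1 D2 z) = fun z => -3 * (2 * (N ^ 2 - 1)
        + N ^ 2 * ((n1 - 1) * (D1 / π - 1) ^ 2 + (n2 - 1) * (D2 / π - 1) ^ 2
          + (n3 - 1) * (z / π - 1) ^ 2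
          + (n4 - 1) * ((2 * π - D1 - D2 - z) / π - 1) ^ 2)) := funext fun z => hcr D1 D2 z
    rw [hfun]
    have h1 : HasDerivAt (fun z : ℝ => z / π - 1) π⁻¹ D3 := by
      simpa using ((hasDerivAt_id D3).div_const π).sub_const 1
    have h2 : HasDerivAt (fun z : ℝ => (2 * π - D1 - D2 - z) / π - 1) (-1 / π) D3 := by
      have hlin : HasDerivAt (fun z : ℝ => 2 * π - D1 - D2 - z) (-1) D3 := by
        have : (fun z : ℝ => 2 * π - D1 - D2 - z) = fun z : ℝ => (2 * π - D1 - D2) - z := by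
          funext z; ring
        rw [this]
        simpa using (hasDerivAt_id D3).const_sub (2 * π - D1 - D2)
      simpa using (hlin.div_const π).sub_const 1
    have h1' := (h1.pow 2).const_mul (n3 - 1)
    have h2' := (h2.pow 2).const_mul (n4 - 1)
    have hsumd := (((hasDerivAt_const D3 ((n1 - 1) * (D1 / π - 1) ^ 2)).add
      (hasDerivAt_const D3 ((n2 - 1) * (D2 / π - 1) ^ 2))).add h1').add h2'
    have hfin := ((hsumd.const_mul (N ^ 2)).const_add (2 * (N ^ 2 - 1))).const_mul (-3)
    refine hfin.deriv.trans ?_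
    push_cast
    ring
  have hn4 : n4 = 2 - n1 - n2 - n3 := by linarith
  subst hn4
  subst hY hPr hD1 hD2 hD3
  have hY1 := (mul_ne_zero_iff.mp hY0).2
  refine ⟨?_, ?_, ?_, ?_, ?_⟩
  · rw [key1]
    field_simp
    ring
  · rw [key2]
    generalize hYv : (2 * (n1 ^ 2 * (n1 - 1) - n2 * n3 * (2 - n1 - n2 - n3) + (n2 ^ 2 * (n2 - 1) - n1 * n3 * (2 - n1 - n2 - n3)) + (n3 ^ 2 * (n3 - 1) - n1 * n2 * (2 - n1 - n2 - n3)) + ((2 - n1 - n2 - n3) ^ 2 * (2 - n1 - n2 - n3 - 1) - n1 * n2 * n3))) = Y at hY0 ⊢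
    field_simp
    subst hYv
    ring
  · rw [key3]
    generalize hYv : (2 * (n1 ^ 2 * (n1 - 1) - n2 * n3 * (2 - n1 - n2 - n3) + (n2 ^ 2 * (n2 - 1) - n1 * n3 * (2 - n1 - n2 - n3)) + (n3 ^ 2 * (n3 - 1) - n1 * n2 * (2 - n1 - n2 - n3)) + ((2 - n1 - n2 - n3) ^ 2 * (2 - n1 - n2 - n3 - 1) - n1 * n2 * n3))) = Y at hY0 ⊢
    field_simp
    subst hYv
    ring
  · field_simp
    ring
  · rw [hcr]
    field_simp
    ring
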